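/- With the allocation construction c₁, c₂ as above: if rᵀf* ≠ 0, then ‖c₁(r,f*)‖² = ‖c₂(r,f*)‖² = −|rᵀf*|/(4‖r‖) + 3Φ₁(r,f*)/(4‖r‖); and if rᵀf* = 0, then ‖c₁(r,f*)‖² = 2‖c₂(r,f*)‖² = Φ₁(r,f*)/‖r‖. In compact form, ‖c₁(r,f*)‖² = (2 − sgn(rᵀf*)²)‖c₂(r,f*)‖². -/

import Mathlib

open Matrix

noncomputable section

def norm3 (r : Fin 3 → ℝ) : ℝ := Real.sqrt (r ⬝ᵥ r)

def Phi1 (r f : Fin 3 → ℝ) : ℝ :=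
  Real.sqrt (norm3 (crossProduct r f) ^ 2 + norm3 r ^ 2 * norm3 f ^ 2)

def Phi2 (r f : Fin 3 → ℝ) : ℝ := (2 - Real.sign (r ⬝ᵥ f) ^ 2) * Phi1 r f

def aX (r f : Fin 3 → ℝ) : ℝ :=
  -(Real.sign (r ⬝ᵥ f) / 2) * Real.sqrt ((|r ⬝ᵥ f| + Phi1 r f) / norm3 r)

def aY (r f : Fin 3 → ℝ) : ℝ :=
  (1 / Real.sqrt 2) * Real.sqrt ((-|r ⬝ᵥ f| + Phi2 r f) / norm3 r)

def bX (r f : Fin 3 → ℝ) : ℝ :=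
  (1 / 2) * Real.sqrt ((|r ⬝ᵥ f| + Phi2 r f) / norm3 r)

def bY (r f : Fin 3 → ℝ) : ℝ :=
  -(Real.sign (r ⬝ᵥ f) / Real.sqrt 2) * Real.sqrt ((-|r ⬝ᵥ f| + Phi1 r f) / norm3 r)

open Classical in
def Rmat (r f : Fin 3 → ℝ) : Matrix (Fin 3) (Fin 3) ℝ :=
  if crossProduct r f ≠ 0 then
    Matrix.of ![ (1 / norm3 r) • r,
      (1 / (norm3 r * norm3 (crossProduct r f))) • ((r ⬝ᵥ r) • f - (r ⬝ᵥ f) • r),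
      (1 / norm3 (crossProduct r f)) • (crossProduct r f) ]
  else
    Matrix.of ![ (1 / norm3 r) • r, 0, 0 ]

def c1 (r f : Fin 3 → ℝ) : Fin 3 → ℝ := (Rmat r f)ᵀ.mulVec ![aX r f, aY r f, 0]

def c2 (r f : Fin 3 → ℝ) : Fin 3 → ℝ := (Rmat r f)ᵀ.mulVec ![bX r f, bY r f, 0]

def f3 (r u v : Fin 3 → ℝ) : Fin 3 → ℝ :=
  ((v ⬝ᵥ r) / norm3 r) • u + ((u ⬝ᵥ r) / norm3 r) • v + ((u ⬝ᵥ v) / norm3 r) • r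
    - (5 * (u ⬝ᵥ r) * (v ⬝ᵥ r) / norm3 r ^ 3) • r

end
open Matrix

lemma dot_expand (x y : Fin 3 → ℝ) : x ⬝ᵥ y = x 0 * y 0 + x 1 * y 1 + x 2 * y 2 := by
  simp [dotProduct, Fin.sum_univ_three]

lemma dot_self_nonneg (x : Fin 3 → ℝ) : 0 ≤ x ⬝ᵥ x := by
  rw [dot_expand]; nlinarith [sq_nonneg (x 0), sq_nonneg (x 1), sq_nonneg (x 2)]

lemma norm3_sq (x : Fin 3 → ℝ) : norm3 x ^ 2 = x ⬝ᵥ x :=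
  Real.sq_sqrt (dot_self_nonneg x)

lemma norm3_pos (x : Fin 3 → ℝ) (hx : x ≠ 0) : 0 < norm3 x := by
  apply Real.sqrt_pos.mpr
  rcases (dot_self_nonneg x).lt_or_eq with h | h
  · exact h
  · exact absurd (dotProduct_self_eq_zero.mp h.symm) hx

lemma cross_expand (r f : Fin 3 → ℝ) : crossProduct r f =
    ![r 1 * f 2 - r 2 * f 1, r 2 * f 0 - r 0 * f 2, r 0 * f 1 - r 1 * f 0] := by
  simp [crossProduct]

lemma lagrange (r f : Fin 3 → ℝ) :
    crossProduct r f ⬝ᵥ crossProduct r f = (r ⬝ᵥ r) * (f ⬝ᵥ f) - (r ⬝ᵥ f) ^ 2 := by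
  rw [cross_expand]
  simp only [dot_expand]
  simp only [Matrix.cons_val_zero, Matrix.cons_val_one, Matrix.head_cons,
    Matrix.cons_val_two, Matrix.tail_cons]
  ring

lemma key_dot (r f : Fin 3 → ℝ) (a b : ℝ) (hr : r ≠ 0) (hc : crossProduct r f ≠ 0) :
    ((Rmat r f)ᵀ.mulVec ![a, b, 0]) ⬝ᵥ ((Rmat r f)ᵀ.mulVec ![a, b, 0]) = a ^ 2 + b ^ 2 := by
  have hnr := norm3_pos r hr
  have hnc := norm3_pos _ hc
  set nr := norm3 r with hnrdef
  set nc := norm3 (crossProduct r f) with hncdef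
  set w : Fin 3 → ℝ := (r ⬝ᵥ r) • f - (r ⬝ᵥ f) • r with hw
  have heq : (Rmat r f)ᵀ.mulVec ![a, b, 0] = (a / nr) • r + (b / (nr * nc)) • w := by
    funext i
    simp [Rmat, hc, Matrix.mulVec, dotProduct, Fin.sum_univ_three, Matrix.transpose_apply, hw]
    ring
  have hw1 : r ⬝ᵥ w = 0 := by
    simp only [hw, dot_expand, Pi.sub_apply, Pi.smul_apply, smul_eq_mul]; ring
  have hw2 : w ⬝ᵥ w = (r ⬝ᵥ r) * (crossProduct r f ⬝ᵥ crossProduct r f) := by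
    rw [lagrange]
    simp only [hw, dot_expand, Pi.sub_apply, Pi.smul_apply, smul_eq_mul]; ring
  rw [heq]
  rw [dotProduct_add, add_dotProduct, add_dotProduct, smul_dotProduct, smul_dotProduct,
    smul_dotProduct, smul_dotProduct, dotProduct_smul, dotProduct_smul, dotProduct_smul,
    dotProduct_smul, hw1, dotProduct_comm w r, hw1, hw2, ← norm3_sq r, ← norm3_sq (crossProduct r f),
    ← hnrdef, ← hncdef]
  field_simp
  ring_nf
  field_simp

lemma key_dot0 (r f : Fin 3 → ℝ) (a b : ℝ) (hr : r ≠ 0) (hc : ¬ crossProduct r f ≠ 0) :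
    ((Rmat r f)ᵀ.mulVec ![a, b, 0]) ⬝ᵥ ((Rmat r f)ᵀ.mulVec ![a, b, 0]) = a ^ 2 := by
  have hnr := norm3_pos r hr
  have heq : (Rmat r f)ᵀ.mulVec ![a, b, 0] = (a / norm3 r) • r := by
    funext i
    simp [Rmat, hc, Matrix.mulVec, dotProduct, Fin.sum_univ_three, Matrix.transpose_apply]
    ring
  rw [heq, smul_dotProduct, dotProduct_smul, ← norm3_sq r]
  field_simp
  ring_nf
  field_simp

lemma sign_sq_ne (d : ℝ) (hd : d ≠ 0) : Real.sign d ^ 2 = 1 := by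
  rcases hd.lt_or_gt with h | h
  · rw [Real.sign_of_neg h]; norm_num
  · rw [Real.sign_of_pos h]; norm_num

lemma Phi1_nonneg (r f : Fin 3 → ℝ) : 0 ≤ Phi1 r f := Real.sqrt_nonneg _

lemma Phi1_sq (r f : Fin 3 → ℝ) : Phi1 r f ^ 2 =
    2 * (crossProduct r f ⬝ᵥ crossProduct r f) + (r ⬝ᵥ f) ^ 2 := by
  have h : Phi1 r f ^ 2 = norm3 (crossProduct r f) ^ 2 + norm3 r ^ 2 * norm3 f ^ 2 := by
    apply Real.sq_sqrt
    positivity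
  rw [h, norm3_sq, norm3_sq, norm3_sq, lagrange]
  ring

lemma Phi1_ge (r f : Fin 3 → ℝ) : |r ⬝ᵥ f| ≤ Phi1 r f := by
  have h1 : (r ⬝ᵥ f) ^ 2 ≤ Phi1 r f ^ 2 := by
    rw [Phi1_sq]; nlinarith [dot_self_nonneg (crossProduct r f)]
  nlinarith [Phi1_nonneg r f, abs_nonneg (r ⬝ᵥ f), sq_abs (r ⬝ᵥ f)]

lemma Phi1_eq_of_cross_zero (r f : Fin 3 → ℝ) (hc : crossProduct r f = 0) :
    Phi1 r f = |r ⬝ᵥ f| := by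
  have h : Phi1 r f ^ 2 = (r ⬝ᵥ f) ^ 2 := by rw [Phi1_sq, hc]; simp
  have h2 : Phi1 r f ^ 2 = |r ⬝ᵥ f| ^ 2 := by rw [h, sq_abs]
  nlinarith [Phi1_nonneg r f, abs_nonneg (r ⬝ᵥ f)]

lemma Phi2_ge (r f : Fin 3 → ℝ) : |r ⬝ᵥ f| ≤ Phi2 r f := by
  unfold Phi2
  by_cases hd : r ⬝ᵥ f = 0
  · rw [hd]; simp; nlinarith [Phi1_nonneg r f, sq_nonneg (Real.sign (0:ℝ))]
  · rw [sign_sq_ne _ hd]; have := Phi1_ge r f; linarith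

lemma aX_sq (r f : Fin 3 → ℝ) (hr : r ≠ 0) :
    aX r f ^ 2 = Real.sign (r ⬝ᵥ f) ^ 2 / 4 * ((|r ⬝ᵥ f| + Phi1 r f) / norm3 r) := by
  have h : (0:ℝ) ≤ (|r ⬝ᵥ f| + Phi1 r f) / norm3 r := by
    have := norm3_pos r hr
    have := Phi1_nonneg r f
    positivity
  unfold aX
  rw [mul_pow, Real.sq_sqrt h]
  ring

lemma aY_sq (r f : Fin 3 → ℝ) (hr : r ≠ 0) :
    aY r f ^ 2 = 1 / 2 * ((-|r ⬝ᵥ f| + Phi2 r f) / norm3 r) := by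
  have h : (0:ℝ) ≤ (-|r ⬝ᵥ f| + Phi2 r f) / norm3 r := by
    have h1 := norm3_pos r hr
    have h2 := Phi2_ge r f
    apply div_nonneg (by linarith) h1.le
  unfold aY
  rw [mul_pow, Real.sq_sqrt h, div_pow, one_pow, Real.sq_sqrt (by norm_num : (0:ℝ) ≤ 2)]

lemma bX_sq (r f : Fin 3 → ℝ) (hr : r ≠ 0) :
    bX r f ^ 2 = 1 / 4 * ((|r ⬝ᵥ f| + Phi2 r f) / norm3 r) := by
  have h : (0:ℝ) ≤ (|r ⬝ᵥ f| + Phi2 r f) / norm3 r := by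
    have h1 := norm3_pos r hr
    have h2 := Phi2_ge r f
    have h3 := abs_nonneg (r ⬝ᵥ f)
    apply div_nonneg (by linarith) h1.le
  unfold bX
  rw [mul_pow, Real.sq_sqrt h]
  ring

lemma bY_sq (r f : Fin 3 → ℝ) (hr : r ≠ 0) :
    bY r f ^ 2 = Real.sign (r ⬝ᵥ f) ^ 2 / 2 * ((-|r ⬝ᵥ f| + Phi1 r f) / norm3 r) := by
  have h : (0:ℝ) ≤ (-|r ⬝ᵥ f| + Phi1 r f) / norm3 r := by
    have h1 := norm3_pos r hr
    have h2 := Phi1_ge r f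
    apply div_nonneg (by linarith) h1.le
  unfold bY
  rw [mul_pow, Real.sq_sqrt h, neg_pow, div_pow, Real.sq_sqrt (by norm_num : (0:ℝ) ≤ 2)]
  ring

theorem allocation_norms (r f : Fin 3 → ℝ) (hr : r ≠ 0) :
    (r ⬝ᵥ f ≠ 0 →
      norm3 (c1 r f) ^ 2 = norm3 (c2 r f) ^ 2 ∧
      norm3 (c1 r f) ^ 2 = -|r ⬝ᵥ f| / (4 * norm3 r) + 3 * Phi1 r f / (4 * norm3 r)) ∧
    (r ⬝ᵥ f = 0 →
      norm3 (c1 r f) ^ 2 = 2 * norm3 (c2 r f) ^ 2 ∧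
      norm3 (c1 r f) ^ 2 = Phi1 r f / norm3 r) ∧
    norm3 (c1 r f) ^ 2 = (2 - Real.sign (r ⬝ᵥ f) ^ 2) * norm3 (c2 r f) ^ 2 := by
  have hnr := norm3_pos r hr
  have hnr' : norm3 r ≠ 0 := hnr.ne'
  have hP0 := Phi1_nonneg r f
  have hPge := Phi1_ge r f
  have habs := abs_nonneg (r ⬝ᵥ f)
  by_cases hc : crossProduct r f ≠ 0
  · have h1 : norm3 (c1 r f) ^ 2 = aX r f ^ 2 + aY r f ^ 2 := by
      rw [norm3_sq]; exact key_dot r f _ _ hr hc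
    have h2 : norm3 (c2 r f) ^ 2 = bX r f ^ 2 + bY r f ^ 2 := by
      rw [norm3_sq]; exact key_dot r f _ _ hr hc
    rw [h1, h2, aX_sq r f hr, aY_sq r f hr, bX_sq r f hr, bY_sq r f hr]
    by_cases hd : r ⬝ᵥ f = 0
    · rw [hd, Real.sign_zero]
      unfold Phi2
      rw [hd, Real.sign_zero]
      refine ⟨fun h => absurd rfl h, fun _ => ⟨by field_simp <;> try ring, by field_simp <;> try ring⟩, ?_⟩
      field_simp <;> try ring
    · rw [sign_sq_ne _ hd]
      unfold Phi2
      rw [sign_sq_ne _ hd]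
      refine ⟨fun _ => ⟨by field_simp <;> try ring, by field_simp <;> try ring⟩, fun h => absurd h hd, ?_⟩
      field_simp <;> try ring
  · push_neg at hc
    have hPeq := Phi1_eq_of_cross_zero r f hc
    have h1 : norm3 (c1 r f) ^ 2 = aX r f ^ 2 := by
      rw [norm3_sq]; exact key_dot0 r f _ _ hr (by simp [hc])
    have h2 : norm3 (c2 r f) ^ 2 = bX r f ^ 2 := by
      rw [norm3_sq]; exact key_dot0 r f _ _ hr (by simp [hc])
    rw [h1, h2, aX_sq r f hr, bX_sq r f hr]
    by_cases hd : r ⬝ᵥ f = 0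
    · rw [hd, Real.sign_zero]
      unfold Phi2
      rw [hd, Real.sign_zero]
      have hP : Phi1 r f = 0 := by rw [hPeq, hd, abs_zero]
      rw [hP]
      refine ⟨fun h => absurd rfl h, fun _ => ⟨by simp, by simp⟩, ?_⟩
      simp
    · rw [sign_sq_ne _ hd]
      unfold Phi2
      rw [sign_sq_ne _ hd]
      rw [hPeq]
      refine ⟨fun _ => ⟨by field_simp <;> try ring, by field_simp <;> try ring⟩, fun h => absurd h hd, ?_⟩
      field_simp <;> try ring
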